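/- KL divergence bound for MNL choice distributions: fix a nonempty assortment S ⊆ {1,...,N} with 1 ∈ S, and ε ∈ (0,1). Let P₀ be the distribution on {0,1,...,N} with P₀(0) = 2/(2+|S|), P₀(i) = 1/(2+|S|) for i ∈ S, and 0 otherwise; let P₁ be the distribution with P₁(0) = 2/(2+|S|+2ε), P₁(i) = 1/(2+|S|+2ε) for i ∈ S\{1}, P₁(1) = (1+2ε)/(2+|S|+2ε), and 0 otherwise. Then KL(P₀‖P₁) ≤ 4ε². -/

import Mathlib

open Real

lemma log_ub {x : ℝ} (hx : 0 < x) : Real.log x ≤ x - 1 :=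
  Real.log_le_sub_one_of_pos hx

lemma log_lb {x : ℝ} (hx : 0 < x) : 1 - x⁻¹ ≤ Real.log x := by
  have h := Real.log_le_sub_one_of_pos (inv_pos.mpr hx)
  rw [Real.log_inv] at h
  linarith

set_option maxHeartbeats 1000000 in
theorem mnl_choice_kl_bound (N : ℕ) (S : Finset ℕ) (hSsub : S ⊆ Finset.Icc 1 N)
    (h1S : (1 : ℕ) ∈ S) (ε : ℝ) (hε0 : 0 < ε) (hε1 : ε < 1)
    (P₀ P₁ : ℕ → ℝ)
    (hP₀ : ∀ j, P₀ j = if j = 0 then 2 / (2 + (S.card : ℝ))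
      else if j ∈ S then 1 / (2 + (S.card : ℝ)) else 0)
    (hP₁ : ∀ j, P₁ j = if j = 0 then 2 / (2 + (S.card : ℝ) + 2 * ε)
      else if j = 1 then (1 + 2 * ε) / (2 + (S.card : ℝ) + 2 * ε)
      else if j ∈ S then 1 / (2 + (S.card : ℝ) + 2 * ε) else 0) :
    ∑ j ∈ insert 0 S, P₀ j * Real.log (P₀ j / P₁ j) ≤ 4 * ε ^ 2 := by
  have h0S : (0:ℕ) ∉ S := by
    intro h
    have := hSsub h
    simp [Finset.mem_Icc] at this
  have hK1 : (1:ℝ) ≤ (S.card : ℝ) := by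
    exact_mod_cast Finset.card_pos.mpr ⟨1, h1S⟩
  set K : ℝ := (S.card : ℝ) with hKdef
  set c : ℝ := 2 + K with hcdef
  set d : ℝ := 2 + K + 2*ε with hddef
  have hcpos : 0 < c := by simp [hcdef]; linarith
  have hdpos : 0 < d := by simp [hddef]; linarith
  have h1e : (0:ℝ) < 1 + 2*ε := by linarith
  rw [Finset.sum_insert h0S, ← Finset.add_sum_erase S _ h1S]
  have hterm : ∀ j ∈ S.erase 1, P₀ j * Real.log (P₀ j / P₁ j)
      = 1/c * Real.log ((1/c) / (1/d)) := by
    intro j hj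
    obtain ⟨hj1, hjS⟩ := Finset.mem_erase.mp hj
    have hj0 : j ≠ 0 := by
      intro h; exact h0S (h ▸ hjS)
    rw [hP₀ j, hP₁ j]
    simp [hj0, hj1, hjS]
  rw [Finset.sum_congr rfl hterm, Finset.sum_const, Finset.card_erase_of_mem h1S,
    nsmul_eq_mul]
  have hcard : ((S.card - 1 : ℕ) : ℝ) = K - 1 := by
    have : 1 ≤ S.card := Finset.card_pos.mpr ⟨1, h1S⟩
    push_cast [this]
    ring
  rw [hcard, hP₀ 0, hP₀ 1, hP₁ 0, hP₁ 1]
  simp only [if_true, ite_true, ite_false, if_false, one_ne_zero, if_pos h1S,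
    reduceIte, if_neg (one_ne_zero)]
  -- now pure real inequality
  have hr1 : (2/c) / (2/d) = d/c := by field_simp; all_goals ring
  have hr2 : (1/c) / ((1+2*ε)/d) = d / (c * (1+2*ε)) := by field_simp; all_goals ring
  have hr3 : (1/c) / (1/d) = d/c := by field_simp
  rw [hr1, hr2, hr3]
  have hlsplit : Real.log (d / (c * (1+2*ε))) = Real.log (d/c) - Real.log (1+2*ε) := by
    rw [Real.log_div hdpos.ne' (by positivity), Real.log_mul hcpos.ne' h1e.ne',
      Real.log_div hdpos.ne' hcpos.ne']
    ring
  rw [hlsplit]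
  have hA : Real.log (d/c) ≤ 2*ε/c := by
    have := log_ub (x := d/c) (by positivity)
    have hd : d/c - 1 = 2*ε/c := by field_simp [hddef, hcdef]; linarith
    linarith [hd ▸ this]
  have hB : 2*ε/(1+2*ε) ≤ Real.log (1+2*ε) := by
    have := log_lb (x := 1+2*ε) h1e
    have h2 : 1 - (1+2*ε)⁻¹ = 2*ε/(1+2*ε) := by field_simp; ring
    linarith [h2 ▸ this]
  set A := Real.log (d/c)
  set B := Real.log (1+2*ε)
  have hc3 : 3 ≤ c := by simp [hcdef]; linarith
  -- LHS = 2/c*A + 1/c*(A - B) + (K-1)*(1/c*A) = (K+2)/c*A - B/c = A - B/c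
  have key : 2/c * A + 1/c * (A - B) + (K-1) * (1/c * A) ≤ 4*ε^2 := by
    have hLHS : 2/c * A + 1/c * (A - B) + (K-1) * (1/c * A) = A - B/c := by
      field_simp
      ring
    rw [hLHS]
    have hBc : (2*ε/(1+2*ε))/c ≤ B/c := by gcongr
    have h1 : A - B/c ≤ 2*ε/c - (2*ε/(1+2*ε))/c := by linarith
    have h2 : 2*ε/c - (2*ε/(1+2*ε))/c = 4*ε^2/(c*(1+2*ε)) := by
      field_simp
      ring
    rw [h2] at h1
    have h3 : 4*ε^2/(c*(1+2*ε)) ≤ 4*ε^2 := by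
      have hge : 1 ≤ c*(1+2*ε) := by nlinarith
      rw [div_le_iff₀ (by positivity)]
      nlinarith [sq_nonneg ε, hge]
    linarith
  linarith [key]
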